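/- arXiv:1409.6040 — 3 statements merged into one kernel-verified Lean document; each statement's English description precedes it below -/
import Mathlib

section
/- Assume m := ∫₀^∞ r Π(dr) < ∞ and let η be the largest nonnegative root of ψ. Then ∫₀^∞ e^{−ηu} Π̄(u) du = min(m, 1), where Π̄(u) := Π([u,∞)). In particular, μ_⊤(du) := e^{−ηu} Π̄(u)/min(m,1) du is a probability measure on (0,∞) (the law of the undershoot). -/
open MeasureTheory Real Set Filter Topology

/-- With `η` the largest nonnegative root of `ψ`, one has
`∫₀^∞ e^{-ηu} Π̄(u) du = min(m,1)` where `Π̄(u) = Π([u,∞))`; in particular,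
`μ_⊤(du) = e^{-ηu} Π̄(u)/min(m,1) du` is a probability measure on `(0,∞)`
(the law of the undershoot). -/
theorem undershoot_density_integrates_to_one
    (ν : Measure ℝ) [IsFiniteMeasure ν] (hsupp : ν (Set.Iic 0) = 0)
    (hint : Integrable (fun r : ℝ => r) ν)
    (m : ℝ) (hm : m = ∫ r, r ∂ν)
    (ψ : ℝ → ℝ) (hψ : ψ = fun l : ℝ => l - ∫ r, (1 - Real.exp (-l * r)) ∂ν)
    (η : ℝ) (hη : η = sSup {l : ℝ | 0 ≤ l ∧ ψ l = 0}) :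
    (∫ u in Set.Ioi (0 : ℝ), Real.exp (-η * u) * (ν (Set.Ici u)).toReal) = min m 1 ∧
      (0 < m → IsProbabilityMeasure
        ((volume.restrict (Set.Ioi (0 : ℝ))).withDensity
          fun u => ENNReal.ofReal
            (Real.exp (-η * u) * (ν (Set.Ici u)).toReal / min m 1))) := by
  -- basic a.e. positivity
  have hae : ∀ᵐ r ∂ν, 0 < r := by
    refine ae_iff.2 ?_
    convert hsupp using 2
    ext r; simp [not_lt]
  have hm0 : 0 ≤ m := hm ▸ integral_nonneg_of_ae (hae.mono fun r hr => hr.le)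
  set b : ℝ := (ν Set.univ).toReal with hb
  have hb0 : 0 ≤ b := ENNReal.toReal_nonneg
  -- integrability of the integrand of ψ
  have hInt : ∀ l : ℝ, 0 ≤ l → Integrable (fun r => 1 - Real.exp (-l * r)) ν := by
    intro l hl
    apply Integrable.mono' (integrable_const 1)
      ((measurable_const.sub (measurable_id'.const_mul (-l)).exp).aestronglyMeasurable)
    filter_upwards [hae] with r hr
    rw [Real.norm_eq_abs, abs_le]
    have h1 : Real.exp (-l * r) ≤ 1 := Real.exp_le_one_iff.2 (by nlinarith)
    have h2 : 0 < Real.exp (-l * r) := Real.exp_pos _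
    constructor <;> simp only [Pi.sub_apply] <;> linarith
  -- upper bounds for the integral in ψ
  have hle_m : ∀ l : ℝ, 0 ≤ l → ∫ r, (1 - Real.exp (-l * r)) ∂ν ≤ l * m := by
    intro l hl
    rw [hm, ← integral_const_mul]
    apply integral_mono_ae (hInt l hl) (hint.const_mul l)
    filter_upwards with r
    have := Real.add_one_le_exp (-l * r)
    nlinarith
  have hle_b : ∀ l : ℝ, 0 ≤ l → ∫ r, (1 - Real.exp (-l * r)) ∂ν ≤ b := by
    intro l hl
    calc ∫ r, (1 - Real.exp (-l * r)) ∂ν ≤ ∫ _, (1 : ℝ) ∂ν := by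
          apply integral_mono_ae (hInt l hl) (integrable_const 1)
          filter_upwards with r
          have h2 : 0 < Real.exp (-l * r) := Real.exp_pos _
          linarith
      _ = b := by simp [hb, Measure.real]
  have hψ0 : ψ 0 = 0 := by simp [hψ]
  -- the set of nonnegative roots
  set S : Set ℝ := {l : ℝ | 0 ≤ l ∧ ψ l = 0} with hS
  have h0S : (0 : ℝ) ∈ S := ⟨le_refl 0, hψ0⟩
  have hSsub : S ⊆ Set.Icc 0 b := by
    rintro l ⟨hl0, hl⟩
    refine ⟨hl0, ?_⟩
    rw [hψ] at hl
    simp only [sub_eq_zero] at hl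
    calc l = ∫ r, (1 - Real.exp (-l * r)) ∂ν := hl
      _ ≤ b := hle_b l hl0
  have hbdd : BddAbove S := ⟨b, fun l hl => (hSsub hl).2⟩
  -- continuity of ψ on compact intervals
  have hcont : ∀ T : ℝ, ContinuousOn ψ (Set.Icc 0 T) := by
    intro T
    rw [hψ]
    apply ContinuousOn.sub continuousOn_id
    rw [continuousOn_iff_continuous_restrict]
    apply continuous_of_dominated (bound := fun _ : ℝ => (1 : ℝ))
    · intro l
      exact (measurable_const.sub (measurable_id'.const_mul (-(l : ℝ))).exp).aestronglyMeasurable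
    · intro l
      filter_upwards [hae] with r hr
      rw [Real.norm_eq_abs, abs_le]
      have hl : 0 ≤ (l : ℝ) := l.2.1
      have h1 : Real.exp (-(l : ℝ) * r) ≤ 1 := Real.exp_le_one_iff.2 (by nlinarith)
      have h2 : 0 < Real.exp (-(l : ℝ) * r) := Real.exp_pos _
      constructor <;> linarith
    · exact integrable_const 1
    · filter_upwards with r
      exact continuous_const.sub (((continuous_subtype_val.neg).mul continuous_const).rexp)
  -- S is closed, so η ∈ S
  have hclosed : IsClosed S := by
    have : S = Set.Icc 0 b ∩ ψ ⁻¹' {0} := by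
      ext l
      constructor
      · intro hl; exact ⟨hSsub hl, hl.2⟩
      · rintro ⟨hl1, hl2⟩; exact ⟨hl1.1, hl2⟩
    rw [this]
    exact (hcont b).preimage_isClosed_of_isClosed isClosed_Icc isClosed_singleton
  have hηS : η ∈ S := hη ▸ hclosed.csSup_mem ⟨0, h0S⟩ hbdd
  have hη0 : 0 ≤ η := hηS.1
  have hψη : η = ∫ r, (1 - Real.exp (-η * r)) ∂ν := by
    have := hηS.2
    rw [hψ] at this
    simpa [sub_eq_zero] using this
  -- the layer cake identity
  have hmeas : Measurable fun u : ℝ => (ν (Set.Ici u)).toReal := by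
    have h : Antitone fun u : ℝ => ν (Set.Ici u) :=
      fun a b hab => measure_mono (Ici_subset_Ici.2 hab)
    exact ENNReal.measurable_toReal.comp h.measurable
  have hLC : ∀ l : ℝ,
      ∫⁻ r, ENNReal.ofReal (∫ t in (0 : ℝ)..r, Real.exp (-l * t)) ∂ν
        = ∫⁻ u in Set.Ioi 0, ν (Set.Ici u) * ENNReal.ofReal (Real.exp (-l * u)) := by
    intro l
    have h := lintegral_comp_eq_lintegral_meas_le_mul (f := fun r : ℝ => r)
      (g := fun t => Real.exp (-l * t)) ν (hae.mono fun r hr => hr.le)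
      aemeasurable_id
      (fun t _ => ((Real.continuous_exp.comp
        (continuous_const.mul continuous_id)).intervalIntegrable 0 t))
      (Eventually.of_forall fun t => (Real.exp_pos _).le)
    rw [h]
    rfl
  have hconv : ∀ l : ℝ,
      ∫ u in Set.Ioi (0 : ℝ), Real.exp (-l * u) * (ν (Set.Ici u)).toReal
        = (∫⁻ u in Set.Ioi 0, ν (Set.Ici u) * ENNReal.ofReal (Real.exp (-l * u))).toReal := by
    intro l
    rw [integral_eq_lintegral_of_nonneg_ae
      (Eventually.of_forall fun u => mul_nonneg (Real.exp_pos _).le ENNReal.toReal_nonneg)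
      (((measurable_id'.const_mul (-l)).exp.mul hmeas).aestronglyMeasurable)]
    congr 1
    apply lintegral_congr_ae
    filter_upwards with u
    rw [ENNReal.ofReal_mul (Real.exp_pos _).le, ENNReal.ofReal_toReal (measure_ne_top ν _),
      mul_comm]
  -- the key identity : the lintegral equals ofReal (min m 1)
  have hkey : (∫⁻ u in Set.Ioi 0, ν (Set.Ici u) * ENNReal.ofReal (Real.exp (-η * u)))
      = ENNReal.ofReal (min m 1) := by
    rcases eq_or_lt_of_le hη0 with hη0' | hηpos
    · -- case η = 0 : show m ≤ 1 and the integral is m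
      have hm1 : m ≤ 1 := by
        by_contra hm1
        push_neg at hm1
        -- find l₀ > 0 with ψ l₀ < 0
        set l : ℕ → ℝ := fun n => 1 / (n + 1 : ℝ) with hl
        have hlpos : ∀ n, 0 < l n := fun n => by positivity
        have hl0 : Tendsto l atTop (𝓝 0) := tendsto_one_div_add_atTop_nhds_zero_nat
        have hltd : Tendsto l atTop (𝓝[≠] 0) := by
          rw [tendsto_nhdsWithin_iff]
          exact ⟨hl0, Eventually.of_forall fun n => (hlpos n).ne'⟩
        have htd : Tendsto (fun n : ℕ => ∫ r, (1 - Real.exp (-(l n) * r)) / (l n) ∂ν)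
            atTop (𝓝 m) := by
          rw [hm]
          apply tendsto_integral_of_dominated_convergence (bound := fun r => |r|)
          · intro n
            exact ((measurable_const.sub
              (measurable_id'.const_mul (-(l n))).exp).div_const _).aestronglyMeasurable
          · exact hint.abs
          · intro n
            filter_upwards [hae] with r hr
            rw [Real.norm_eq_abs, abs_le, abs_of_pos hr]
            have h1 : Real.exp (-(l n) * r) ≤ 1 :=
              Real.exp_le_one_iff.2 (by nlinarith [hlpos n])
            have h2 := Real.add_one_le_exp (-(l n) * r)
            have h3 : 0 < Real.exp (-(l n) * r) := Real.exp_pos _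
            constructor
            · have : (0 : ℝ) ≤ (1 - Real.exp (-(l n) * r)) / (l n) :=
                div_nonneg (by linarith) (hlpos n).le
              linarith
            · rw [div_le_iff₀ (hlpos n)]; nlinarith [hlpos n]
          · filter_upwards [hae] with r hr
            have hd : HasDerivAt (fun x : ℝ => 1 - Real.exp (-x * r)) r 0 := by
              have h1 : HasDerivAt (fun x : ℝ => -x * r) (-r) 0 := by
                have := (hasDerivAt_id (0 : ℝ)).const_mul (-r)
                simp only [mul_one] at this
                refine this.congr_of_eventuallyEq (Eventually.of_forall fun x => by simp; ring)
              simpa using (h1.exp).const_sub 1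
            have := (hasDerivAt_iff_tendsto_slope.1 hd).comp hltd
            refine this.congr fun n => ?_
            simp [Function.comp_apply, slope_def_field]
        obtain ⟨n, hn⟩ := (htd.eventually (eventually_gt_nhds hm1)).exists
        -- ψ (l n) < 0
        have hψln : ψ (l n) < 0 := by
          rw [hψ]
          simp only [sub_neg]
          have : ∫ r, (1 - Real.exp (-(l n) * r)) / (l n) ∂ν
              = (∫ r, (1 - Real.exp (-(l n) * r)) ∂ν) / (l n) := integral_div _ _
          rw [this] at hn
          have := (one_lt_div (hlpos n)).1 hn
          linarith
        -- ψ (b + 1) > 0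
        have hψb : 0 < ψ (b + 1) := by
          rw [hψ]
          have := hle_b (b + 1) (by linarith)
          simp only [sub_pos]
          linarith
        -- IVT gives a positive root
        have hlb : l n ≤ b + 1 := by
          have : l n ≤ 1 := by
            rw [hl]
            rw [div_le_one (by positivity)]
            simp [Nat.cast_nonneg]
          linarith
        have hsub : Set.Icc (l n) (b + 1) ⊆ Set.Icc 0 (b + 1) :=
          Set.Icc_subset_Icc (hlpos n).le le_rfl
        have hIVT := intermediate_value_Icc hlb ((hcont (b + 1)).mono hsub)
        have h0mem : (0 : ℝ) ∈ Set.Icc (ψ (l n)) (ψ (b + 1)) := ⟨hψln.le, hψb.le⟩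
        obtain ⟨c, hc, hψc⟩ := hIVT h0mem
        have hcS : c ∈ S := ⟨le_trans (hlpos n).le hc.1, hψc⟩
        have : c ≤ η := hη ▸ le_csSup hbdd hcS
        have : 0 < η := lt_of_lt_of_le (lt_of_lt_of_le (hlpos n) hc.1) this
        linarith [hη0'.symm ▸ this]
      -- now compute the integral with η = 0
      have hmin : min m 1 = m := min_eq_left hm1
      rw [← hLC η, ← hη0']
      have hsimp : ∀ r : ℝ, (∫ t in (0 : ℝ)..r, Real.exp (-(0 : ℝ) * t)) = r := by
        intro r; simp
      calc ∫⁻ r, ENNReal.ofReal (∫ t in (0 : ℝ)..r, Real.exp (-(0 : ℝ) * t)) ∂ν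
          = ∫⁻ r, ENNReal.ofReal r ∂ν := by
            apply lintegral_congr fun r => by rw [hsimp r]
        _ = ENNReal.ofReal (∫ r, r ∂ν) :=
            (ofReal_integral_eq_lintegral_ofReal hint (hae.mono fun r hr => hr.le)).symm
        _ = ENNReal.ofReal (min m 1) := by rw [hmin, hm]
    · -- case η > 0 : min m 1 = 1 and the integral is 1
      have hm1 : 1 ≤ m := by
        have h1 := hle_m η hη0
        rw [← hψη] at h1
        nlinarith
      have hmin : min m 1 = 1 := min_eq_right hm1
      rw [← hLC η]
      have hanti : ∀ r : ℝ, (∫ t in (0 : ℝ)..r, Real.exp (-η * t))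
          = (1 - Real.exp (-η * r)) / η := by
        intro r
        have h : ∀ t : ℝ, HasDerivAt (fun t => -(Real.exp (-η * t)) / η)
            (Real.exp (-η * t)) t := by
          intro t
          have h1 : HasDerivAt (fun t : ℝ => -η * t) (-η) t := by
            simpa using (hasDerivAt_id t).const_mul (-η)
          have := (h1.exp).neg.div_const η
          exact this.congr_deriv (by rw [mul_neg, neg_neg, mul_div_assoc, div_self hηpos.ne', mul_one])
        rw [intervalIntegral.integral_eq_sub_of_hasDerivAt (fun t _ => h t)
          (((Real.continuous_exp.comp (continuous_const.mul continuous_id)).intervalIntegrable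
            0 r))]
        simp
        ring
      calc ∫⁻ r, ENNReal.ofReal (∫ t in (0 : ℝ)..r, Real.exp (-η * t)) ∂ν
          = ∫⁻ r, ENNReal.ofReal ((1 - Real.exp (-η * r)) / η) ∂ν := by
            apply lintegral_congr fun r => by rw [hanti r]
        _ = ENNReal.ofReal (∫ r, (1 - Real.exp (-η * r)) / η ∂ν) := by
            refine (ofReal_integral_eq_lintegral_ofReal ((hInt η hη0).div_const η) ?_).symm
            filter_upwards [hae] with r hr
            have h1 : Real.exp (-η * r) ≤ 1 := Real.exp_le_one_iff.2 (by nlinarith)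
            exact div_nonneg (by linarith) hη0
        _ = ENNReal.ofReal (min m 1) := by
            rw [integral_div, ← hψη, div_self hηpos.ne', hmin]
  -- conclusion, part 1
  have hpart1 : (∫ u in Set.Ioi (0 : ℝ), Real.exp (-η * u) * (ν (Set.Ici u)).toReal)
      = min m 1 := by
    rw [hconv η, hkey, ENNReal.toReal_ofReal (le_min hm0 zero_le_one)]
  refine ⟨hpart1, fun hmpos => ?_⟩
  -- part 2 : probability measure
  have hc : 0 < min m 1 := lt_min hmpos one_pos
  constructor
  rw [withDensity_apply _ MeasurableSet.univ, Measure.restrict_univ]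
  have heq : ∀ u : ℝ, ENNReal.ofReal
      (Real.exp (-η * u) * (ν (Set.Ici u)).toReal / min m 1)
      = (ν (Set.Ici u) * ENNReal.ofReal (Real.exp (-η * u))) * (ENNReal.ofReal (min m 1))⁻¹ := by
    intro u
    rw [ENNReal.ofReal_div_of_pos hc, ENNReal.ofReal_mul (Real.exp_pos _).le,
      ENNReal.ofReal_toReal (measure_ne_top ν _), div_eq_mul_inv, mul_comm (ENNReal.ofReal _)]
  calc ∫⁻ u in Set.Ioi (0 : ℝ), ENNReal.ofReal
        (Real.exp (-η * u) * (ν (Set.Ici u)).toReal / min m 1)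
      = ∫⁻ u in Set.Ioi (0 : ℝ),
          (ν (Set.Ici u) * ENNReal.ofReal (Real.exp (-η * u))) * (ENNReal.ofReal (min m 1))⁻¹ := by
        apply lintegral_congr fun u => heq u
    _ = (∫⁻ u in Set.Ioi (0 : ℝ), ν (Set.Ici u) * ENNReal.ofReal (Real.exp (-η * u)))
          * (ENNReal.ofReal (min m 1))⁻¹ :=
        lintegral_mul_const' _ _ (by simp [ENNReal.inv_ne_top, (ENNReal.ofReal_pos.2 hc).ne', hmpos])
    _ = 1 := by
        rw [hkey]
        exact ENNReal.mul_inv_cancel (ENNReal.ofReal_pos.2 hc).ne' ENNReal.ofReal_ne_top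
end

section
/- Assume m := ∫₀^∞ r Π(dr) < ∞ and let η be the largest nonnegative root of ψ. Then ∫₀^∞ e^{ηv} Π̃̄(v) dv = min(m, 1), where Π̃̄(v) := ∫_{[v,∞)} e^{−ηy} Π(dy) is the tail of the tilted measure Π̃(dy) := e^{−ηy} Π(dy). In particular, μ_⊥(dv) := e^{ηv} Π̃̄(v)/min(m,1) dv is a probability measure on (0,∞) (the law of the overshoot). -/
open MeasureTheory Real Set Filter Topology


lemma ae_pos (ν : Measure ℝ) (hsupp : ν (Set.Iic 0) = 0) : ∀ᵐ r ∂ν, 0 < r := by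
  rw [ae_iff]
  convert hsupp using 2
  ext r; simp [not_lt]

lemma int_one_sub_exp (ν : Measure ℝ) [IsFiniteMeasure ν] (hsupp : ν (Set.Iic 0) = 0)
    (l : ℝ) (hl : 0 ≤ l) : Integrable (fun r => 1 - Real.exp (-l * r)) ν := by
  refine (integrable_const (1:ℝ)).mono' ?_ ?_
  · exact (continuous_const.sub ((continuous_const.mul continuous_id).rexp)).aestronglyMeasurable
  · filter_upwards [ae_pos ν hsupp] with r hr
    have h1 : Real.exp (-l * r) ≤ 1 := by
      apply Real.exp_le_one_iff.mpr; nlinarith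
    have h2 : 0 < Real.exp (-l * r) := Real.exp_pos _
    rw [Real.norm_eq_abs, abs_le]; constructor <;> nlinarith

lemma int_le (ν : Measure ℝ) [IsFiniteMeasure ν] (hsupp : ν (Set.Iic 0) = 0)
    (hint : Integrable (fun r : ℝ => r) ν) (l : ℝ) (hl : 0 ≤ l) :
    ∫ r, (1 - Real.exp (-l * r)) ∂ν ≤ l * ∫ r, r ∂ν := by
  rw [← integral_const_mul]
  refine integral_mono_ae (int_one_sub_exp ν hsupp l hl) (hint.const_mul l) ?_
  filter_upwards [ae_pos ν hsupp] with r hr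
  have := Real.add_one_le_exp (-l * r)
  nlinarith

lemma int_le_mass (ν : Measure ℝ) [IsFiniteMeasure ν] (hsupp : ν (Set.Iic 0) = 0)
    (l : ℝ) (hl : 0 ≤ l) :
    ∫ r, (1 - Real.exp (-l * r)) ∂ν ≤ (ν Set.univ).toReal := by
  have : ∫ r, (1:ℝ) ∂ν = (ν Set.univ).toReal := by simp; rfl
  rw [← this]
  refine integral_mono_ae (int_one_sub_exp ν hsupp l hl) (integrable_const 1) ?_
  filter_upwards with r
  have := Real.exp_pos (-l * r)
  linarith

lemma psi_pos (ν : Measure ℝ) [IsFiniteMeasure ν] (hsupp : ν (Set.Iic 0) = 0)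
    (hint : Integrable (fun r : ℝ => r) ν) (hm : ∫ r, r ∂ν ≤ 1)
    (l : ℝ) (hl : 0 < l) : ∫ r, (1 - Real.exp (-l * r)) ∂ν < l := by
  rcases eq_or_ne ν 0 with h0 | h0
  · simp [h0, hl]
  · have hI := int_one_sub_exp ν hsupp l hl.le
    have hI2 := hint.const_mul l
    set f : ℝ → ℝ := fun r => l * r - (1 - Real.exp (-l * r)) with hf
    have hfnn : 0 ≤ᵐ[ν] f := by
      filter_upwards [ae_pos ν hsupp] with r hr
      have := Real.add_one_le_exp (-l * r); simp only [hf, Pi.zero_apply]; nlinarith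
    have hpos : 0 < ∫ r, f r ∂ν := by
      rw [integral_pos_iff_support_of_nonneg_ae hfnn (hI2.sub hI)]
      have hsub : ∀ᵐ r ∂ν, r ∈ Function.support f := by
        filter_upwards [ae_pos ν hsupp] with r hr
        have hne : -l * r ≠ 0 := by
          have : 0 < l * r := by positivity
          intro h; nlinarith
        have := Real.add_one_lt_exp hne
        simp only [Function.mem_support, hf]
        intro h; nlinarith
      have hcompl : ν (Function.support f)ᶜ = 0 := ae_iff.mp hsub
      have huniv : ν Set.univ ≠ 0 := by simpa [Measure.measure_univ_eq_zero] using h0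
      rw [pos_iff_ne_zero]
      intro h
      apply huniv
      have hle := measure_union_le (μ := ν) (Function.support f) (Function.support f)ᶜ
      rw [Set.union_compl_self, h, hcompl] at hle
      simpa using hle
    have h2 : ∫ r, f r ∂ν = l * (∫ r, r ∂ν) - ∫ r, (1 - Real.exp (-l * r)) ∂ν := by
      rw [hf, integral_sub hI2 hI, integral_const_mul]
    nlinarith [h2, hpos, hm, hl]

lemma cont_at (ν : Measure ℝ) [IsFiniteMeasure ν] (hsupp : ν (Set.Iic 0) = 0)
    (l₀ : ℝ) (h : 0 < l₀) :
    ContinuousAt (fun l => ∫ r, (1 - Real.exp (-l * r)) ∂ν) l₀ := by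
  apply continuousAt_of_dominated (bound := fun _ => (1:ℝ))
  · filter_upwards with l
    exact (continuous_const.sub ((continuous_const.mul continuous_id).rexp)).aestronglyMeasurable
  · filter_upwards [eventually_gt_nhds h] with l hl
    filter_upwards [ae_pos ν hsupp] with r hr
    have h1 : Real.exp (-l * r) ≤ 1 := by
      apply Real.exp_le_one_iff.mpr; nlinarith
    have h2 : 0 < Real.exp (-l * r) := Real.exp_pos _
    rw [Real.norm_eq_abs, abs_le]; constructor <;> nlinarith
  · exact integrable_const 1
  · filter_upwards with r
    exact (continuous_const.sub (((continuous_id.neg.mul continuous_const)).rexp)).continuousAt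

lemma tendsto_gn (ν : Measure ℝ) [IsFiniteMeasure ν] (hsupp : ν (Set.Iic 0) = 0)
    (hint : Integrable (fun r : ℝ => r) ν) :
    Tendsto (fun n : ℕ => ∫ r, (n:ℝ) * (1 - Real.exp (-(1/(n:ℝ)) * r)) ∂ν) atTop
      (𝓝 (∫ r, r ∂ν)) := by
  apply tendsto_integral_of_dominated_convergence (fun r => r) _ hint
  · intro n
    filter_upwards [ae_pos ν hsupp] with r hr
    rcases Nat.eq_zero_or_pos n with h0 | h0
    · simp [h0]; linarith
    · have hn : (0:ℝ) < n := by exact_mod_cast h0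
      have h1 : Real.exp (-(1/(n:ℝ)) * r) ≤ 1 := by
        apply Real.exp_le_one_iff.mpr
        have : 0 < (1/(n:ℝ)) * r := by positivity
        linarith
      have h2 : 0 < Real.exp (-(1/(n:ℝ)) * r) := Real.exp_pos _
      have h3 := Real.add_one_le_exp (-(1/(n:ℝ)) * r)
      rw [Real.norm_eq_abs, abs_le]
      constructor
      · nlinarith
      · have : (n:ℝ) * (1 - Real.exp (-(1/(n:ℝ)) * r)) ≤ (n:ℝ) * ((1/(n:ℝ)) * r) := by
          apply mul_le_mul_of_nonneg_left _ hn.le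
          nlinarith
        calc (n:ℝ) * (1 - Real.exp (-(1/(n:ℝ)) * r)) ≤ (n:ℝ) * ((1/(n:ℝ)) * r) := this
          _ = r := by field_simp
  · filter_upwards [ae_pos ν hsupp] with r hr
    -- pointwise limit
    have hslope : Tendsto (fun y : ℝ => (1 - Real.exp (-y)) / y) (𝓝[≠] 0) (𝓝 1) := by
      have hd : HasDerivAt (fun x : ℝ => 1 - Real.exp (-x)) 1 0 := by
        have h1 : HasDerivAt (fun x : ℝ => -x) (-1) 0 := (hasDerivAt_id 0).neg
        have h2 := h1.exp
        have h3 := h2.const_sub 1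
        refine h3.congr_deriv ?_
        simp
      have := hasDerivAt_iff_tendsto_slope.mp hd
      apply this.congr'
      filter_upwards [self_mem_nhdsWithin] with y hy
      simp [slope, hy]
      ring
    have hrn : Tendsto (fun n : ℕ => r / (n:ℝ)) atTop (𝓝[≠] 0) := by
      rw [tendsto_nhdsWithin_iff]
      constructor
      · exact tendsto_const_div_atTop_nhds_zero_nat r
      · filter_upwards [eventually_gt_atTop 0] with n hn
        have : (0:ℝ) < n := by exact_mod_cast hn
        exact Set.mem_compl_singleton_iff.mpr (by positivity)
    have hcomp := hslope.comp hrn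
    have := hcomp.const_mul r
    simp only [mul_one] at this
    apply this.congr'
    filter_upwards [eventually_gt_atTop 0] with n hn
    have hn' : (0:ℝ) < n := by exact_mod_cast hn
    have hrne : r / (n:ℝ) ≠ 0 := by positivity
    simp only [Function.comp_apply]
    rw [show -(1/(n:ℝ)) * r = -(r/(n:ℝ)) by ring]
    field_simp
  · exact fun n => (continuous_const.mul
      (continuous_const.sub ((continuous_const.mul continuous_id).rexp))).aestronglyMeasurable

lemma eta_zero (ν : Measure ℝ) [IsFiniteMeasure ν] (hsupp : ν (Set.Iic 0) = 0)
    (hint : Integrable (fun r : ℝ => r) ν) (hm : ∫ r, r ∂ν ≤ 1)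
    (ψ : ℝ → ℝ) (hψ : ψ = fun l : ℝ => l - ∫ r, (1 - Real.exp (-l * r)) ∂ν) :
    sSup {l : ℝ | 0 ≤ l ∧ ψ l = 0} = 0 := by
  have hS : {l : ℝ | 0 ≤ l ∧ ψ l = 0} = {0} := by
    ext l
    simp only [Set.mem_setOf_eq, Set.mem_singleton_iff, hψ]
    constructor
    · rintro ⟨hl, hl0⟩
      rcases hl.eq_or_lt with h | h
      · exact h.symm
      · exfalso
        have := psi_pos ν hsupp hint hm l h
        linarith
    · rintro rfl
      refine ⟨le_refl 0, ?_⟩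
      simp
  rw [hS, csSup_singleton]

lemma eta_root (ν : Measure ℝ) [IsFiniteMeasure ν] (hsupp : ν (Set.Iic 0) = 0)
    (hint : Integrable (fun r : ℝ => r) ν) (hm : 1 < ∫ r, r ∂ν)
    (ψ : ℝ → ℝ) (hψ : ψ = fun l : ℝ => l - ∫ r, (1 - Real.exp (-l * r)) ∂ν) :
    0 < sSup {l : ℝ | 0 ≤ l ∧ ψ l = 0} ∧ ψ (sSup {l : ℝ | 0 ≤ l ∧ ψ l = 0}) = 0 := by
  set S := {l : ℝ | 0 ≤ l ∧ ψ l = 0} with hS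
  set b0 := (ν Set.univ).toReal with hb0
  -- find λ₀ > 0 with ψ λ₀ < 0
  obtain ⟨l₀, hl₀pos, hl₀neg⟩ : ∃ l₀ : ℝ, 0 < l₀ ∧ ψ l₀ < 0 := by
    have ht := tendsto_gn ν hsupp hint
    have hev : ∀ᶠ n : ℕ in atTop, 1 < ∫ r, (n:ℝ) * (1 - Real.exp (-(1/(n:ℝ)) * r)) ∂ν :=
      ht.eventually (eventually_gt_nhds hm)
    obtain ⟨n, hn1, hn⟩ := (hev.and (eventually_gt_atTop 0)).exists
    have hnpos : (0:ℝ) < n := by exact_mod_cast hn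
    refine ⟨1/(n:ℝ), by positivity, ?_⟩
    rw [hψ]
    simp only
    rw [integral_const_mul] at hn1
    have : 1/(n:ℝ) < ∫ r, (1 - Real.exp (-(1/(n:ℝ)) * r)) ∂ν := by
      rw [div_lt_iff₀ hnpos, mul_comm]
      exact hn1
    linarith
  -- ψ positive for large l
  have hub : ∀ l : ℝ, 0 ≤ l → l - b0 ≤ ψ l := by
    intro l hl
    rw [hψ]
    simp only
    have := int_le_mass ν hsupp l hl
    linarith
  have hSbdd : BddAbove S := by
    refine ⟨b0, fun l hl => ?_⟩
    rcases hl with ⟨hl0, hlψ⟩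
    by_contra h
    push_neg at h
    have := hub l hl0
    rw [hlψ] at this
    linarith
  -- IVT
  set B := max (l₀ + 1) (b0 + 1) with hB
  have hl₀B : l₀ ≤ B := le_trans (by linarith) (le_max_left _ _)
  have hψB : 0 ≤ ψ B := by
    have h1 : 0 ≤ B := le_trans (by linarith) hl₀B
    have := hub B h1
    have : b0 + 1 ≤ B := le_max_right _ _
    have := hub B h1
    linarith [le_max_right (l₀ + 1) (b0 + 1)]
  have hcont : ContinuousOn ψ (Set.Icc l₀ B) := by
    intro x hx
    have hx0 : 0 < x := lt_of_lt_of_le hl₀pos hx.1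
    rw [hψ]
    exact ((continuousAt_id.sub (cont_at ν hsupp x hx0)).continuousWithinAt)
  obtain ⟨ρ, hρmem, hρ⟩ : ∃ ρ ∈ Set.Icc l₀ B, ψ ρ = 0 := by
    have := intermediate_value_Icc hl₀B hcont
    have h0 : (0:ℝ) ∈ Set.Icc (ψ l₀) (ψ B) := ⟨hl₀neg.le, hψB⟩
    obtain ⟨ρ, hρ1, hρ2⟩ := this h0
    exact ⟨ρ, hρ1, hρ2⟩
  have hρpos : 0 < ρ := lt_of_lt_of_le hl₀pos hρmem.1
  have hρS : ρ ∈ S := ⟨hρpos.le, hρ⟩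
  have hρb0 : ρ ≤ b0 := by
    by_contra h
    push_neg at h
    have := hub ρ hρpos.le
    rw [hρ] at this
    linarith
  -- T = S ∩ Icc ρ b0
  set T := Set.Icc ρ b0 ∩ ψ ⁻¹' {0} with hT
  have hTclosed : IsClosed T := by
    apply ContinuousOn.preimage_isClosed_of_isClosed _ isClosed_Icc isClosed_singleton
    intro x hx
    have hx0 : 0 < x := lt_of_lt_of_le hρpos hx.1
    rw [hψ]
    exact ((continuousAt_id.sub (cont_at ν hsupp x hx0)).continuousWithinAt)
  have hTne : T.Nonempty := ⟨ρ, ⟨le_refl _, hρb0⟩, hρ⟩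
  have hTbdd : BddAbove T := ⟨b0, fun x hx => hx.1.2⟩
  have hTS : T ⊆ S := fun x hx => ⟨le_trans hρpos.le hx.1.1, hx.2⟩
  have hsupmem : sSup T ∈ T := hTclosed.csSup_mem hTne hTbdd
  have hsup_eq : sSup S = sSup T := by
    apply le_antisymm
    · apply csSup_le ⟨ρ, hρS⟩
      intro s hs
      rcases le_or_gt s ρ with h | h
      · exact le_trans h (le_csSup hTbdd ⟨⟨le_refl _, hρb0⟩, hρ⟩)
      · have hsb0 : s ≤ b0 := by
          by_contra hc
          push_neg at hc
          have := hub s hs.1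
          rw [hs.2] at this
          linarith
        exact le_csSup hTbdd ⟨⟨h.le, hsb0⟩, hs.2⟩
    · exact csSup_le_csSup hSbdd hTne hTS
  constructor
  · rw [hsup_eq]
    exact lt_of_lt_of_le hρpos (le_csSup hTbdd ⟨⟨le_refl _, hρb0⟩, hρ⟩)
  · rw [hsup_eq]
    exact hsupmem.2

lemma tail_lintegral (ν : Measure ℝ) [IsFiniteMeasure ν] (hsupp : ν (Set.Iic 0) = 0)
    (η : ℝ) (hη : 0 ≤ η) :
    ∫⁻ v in Set.Ioi (0:ℝ),
        ENNReal.ofReal (Real.exp (η * v) * ∫ y in Set.Ici v, Real.exp (-η * y) ∂ν)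
      = ∫⁻ y, ENNReal.ofReal (if η = 0 then y else (1 - Real.exp (-η * y))/η) ∂ν := by
  have hinner_int : ∀ v : ℝ, Integrable (fun y => Real.exp (-η*y)) (ν.restrict (Set.Ici v)) := by
    intro v
    refine (integrable_const (1:ℝ)).mono'
      ((continuous_const.mul continuous_id).rexp).aestronglyMeasurable ?_
    refine ae_restrict_of_ae ?_
    filter_upwards [ae_pos ν hsupp] with y hy
    rw [Real.norm_eq_abs, abs_of_pos (Real.exp_pos _)]
    exact Real.exp_le_one_iff.mpr (by nlinarith)
  set f : ℝ → ℝ → ENNReal := fun v y =>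
    Set.indicator (Set.Ici v) (fun y => ENNReal.ofReal (Real.exp (η*v) * Real.exp (-η*y))) y
    with hf
  have huncurry : Function.uncurry f = fun p : ℝ × ℝ =>
      Set.indicator {q : ℝ × ℝ | q.1 ≤ q.2}
        (fun q => ENNReal.ofReal (Real.exp (η*q.1) * Real.exp (-η*q.2))) p := by
    funext p
    simp only [Function.uncurry, hf, Set.indicator_apply, Set.mem_Ici, Set.mem_setOf_eq]
  have hmeas : AEMeasurable (Function.uncurry f)
      ((volume.restrict (Set.Ioi (0:ℝ))).prod ν) := by
    rw [huncurry]
    apply Measurable.aemeasurable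
    apply Measurable.indicator
    · exact (((continuous_const.mul continuous_fst).rexp).mul
        ((continuous_const.mul continuous_snd).rexp)).measurable.ennreal_ofReal
    · exact measurableSet_le measurable_fst measurable_snd
  -- step 1: rewrite LHS
  have step1 : ∫⁻ v in Set.Ioi (0:ℝ),
      ENNReal.ofReal (Real.exp (η * v) * ∫ y in Set.Ici v, Real.exp (-η * y) ∂ν)
      = ∫⁻ v in Set.Ioi (0:ℝ), ∫⁻ y, f v y ∂ν := by
    apply lintegral_congr
    intro v
    have hnn : 0 ≤ᵐ[ν.restrict (Set.Ici v)] fun y => Real.exp (-η*y) :=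
      Eventually.of_forall fun y => (Real.exp_pos _).le
    rw [ENNReal.ofReal_mul (Real.exp_nonneg _),
      ofReal_integral_eq_lintegral_ofReal (hinner_int v) hnn, hf]
    simp only
    rw [lintegral_indicator measurableSet_Ici, ← lintegral_const_mul]
    · apply lintegral_congr; intro y
      rw [ENNReal.ofReal_mul (Real.exp_nonneg _)]
    · exact ((continuous_const.mul continuous_id).rexp).measurable.ennreal_ofReal
  rw [step1, lintegral_lintegral_swap hmeas]
  -- inner integral computation
  apply lintegral_congr_ae
  filter_upwards [ae_pos ν hsupp] with y hy
  have hswap : ∀ v : ℝ, f v y =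
      Set.indicator (Set.Iic y) (fun v => ENNReal.ofReal (Real.exp (η*v) * Real.exp (-η*y))) v := by
    intro v
    simp only [hf, Set.indicator_apply, Set.mem_Ici, Set.mem_Iic]
  calc ∫⁻ v in Set.Ioi (0:ℝ), f v y
      = ∫⁻ v in Set.Ioc 0 y, ENNReal.ofReal (Real.exp (η*v) * Real.exp (-η*y)) := by
        rw [lintegral_congr (hswap)]
        rw [lintegral_indicator measurableSet_Iic, Measure.restrict_restrict measurableSet_Iic]
        rw [Set.inter_comm, Set.Ioi_inter_Iic]
    _ = ENNReal.ofReal (∫ v in Set.Ioc 0 y, Real.exp (η*v) * Real.exp (-η*y)) := by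
        rw [ofReal_integral_eq_lintegral_ofReal]
        · apply Continuous.integrableOn_Ioc
          exact ((continuous_const.mul continuous_id).rexp).mul continuous_const
        · exact Eventually.of_forall fun v => by positivity
    _ = ENNReal.ofReal (if η = 0 then y else (1 - Real.exp (-η * y))/η) := by
        congr 1
        rw [← intervalIntegral.integral_of_le hy.le]
        by_cases h0 : η = 0
        · simp [h0]
        · have hηpos : 0 < η := lt_of_le_of_ne hη (Ne.symm h0)
          rw [if_neg h0]
          have hderiv : ∀ x ∈ Set.uIcc (0:ℝ) y,
              HasDerivAt (fun v => Real.exp (η*v) * Real.exp (-η*y) / η)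
                (Real.exp (η*x) * Real.exp (-η*y)) x := by
            intro x hx
            have h1 : HasDerivAt (fun v : ℝ => η*v) η x := by
              simpa using (hasDerivAt_id x).const_mul η
            have h2 := h1.exp
            have h3 := h2.mul_const (Real.exp (-η*y))
            have h4 := h3.div_const η
            refine h4.congr_deriv ?_
            rw [mul_right_comm, mul_div_cancel_right₀ _ h0]
          rw [intervalIntegral.integral_eq_sub_of_hasDerivAt hderiv
            ((((continuous_const.mul continuous_id).rexp).mul
              continuous_const).intervalIntegrable 0 y)]
          rw [← Real.exp_add]
          field_simp
          simp

/-- With `η` the largest nonnegative root of `ψ` and `Π̃̄(v) = ∫_{[v,∞)} e^{-ηy} Π(dy)`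
the tail of the tilted measure, one has `∫₀^∞ e^{ηv} Π̃̄(v) dv = min(m,1)`; in particular,
`μ_⊥(dv) = e^{ηv} Π̃̄(v)/min(m,1) dv` is a probability measure on `(0,∞)`
(the law of the overshoot). -/
theorem overshoot_density_integrates_to_one
    (ν : Measure ℝ) [IsFiniteMeasure ν] (hsupp : ν (Set.Iic 0) = 0)
    (hint : Integrable (fun r : ℝ => r) ν)
    (m : ℝ) (hm : m = ∫ r, r ∂ν)
    (ψ : ℝ → ℝ) (hψ : ψ = fun l : ℝ => l - ∫ r, (1 - Real.exp (-l * r)) ∂ν)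
    (η : ℝ) (hη : η = sSup {l : ℝ | 0 ≤ l ∧ ψ l = 0}) :
    (∫ v in Set.Ioi (0 : ℝ),
        Real.exp (η * v) * ∫ y in Set.Ici v, Real.exp (-η * y) ∂ν) = min m 1 ∧
      (0 < m → IsProbabilityMeasure
        ((volume.restrict (Set.Ioi (0 : ℝ))).withDensity
          fun v => ENNReal.ofReal
            (Real.exp (η * v) * (∫ y in Set.Ici v, Real.exp (-η * y) ∂ν) / min m 1))) := by
  have haepos := ae_pos ν hsupp
  have hm0 : 0 ≤ m := hm ▸ integral_nonneg_of_ae (haepos.mono fun r h => h.le)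
  have hmin0 : 0 ≤ min m 1 := le_min hm0 zero_le_one
  -- η ≥ 0 and the key lintegral identity with value min m 1
  have hkey : ∃ hη0 : 0 ≤ η,
      ∫⁻ v in Set.Ioi (0:ℝ),
        ENNReal.ofReal (Real.exp (η * v) * ∫ y in Set.Ici v, Real.exp (-η * y) ∂ν)
        = ENNReal.ofReal (min m 1) := by
    rcases le_or_gt m 1 with hm1 | hm1
    · have hη0 : η = 0 := by rw [hη]; exact eta_zero ν hsupp hint (hm ▸ hm1) ψ hψ
      refine ⟨hη0.ge, ?_⟩
      rw [tail_lintegral ν hsupp η (le_of_eq hη0.symm), min_eq_left hm1]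
      have : ∀ y : ℝ, (if η = 0 then y else (1 - Real.exp (-η * y))/η) = y := by
        intro y; rw [if_pos hη0]
      simp only [this]
      rw [← ofReal_integral_eq_lintegral_ofReal hint (haepos.mono fun r h => h.le), ← hm]
    · obtain ⟨hηpos, hψη⟩ : 0 < η ∧ ψ η = 0 := by
        rw [hη]; exact eta_root ν hsupp hint (hm ▸ hm1) ψ hψ
      have hroot : ∫ r, (1 - Real.exp (-η * r)) ∂ν = η := by
        rw [hψ] at hψη; simp only at hψη; linarith
      refine ⟨hηpos.le, ?_⟩
      rw [tail_lintegral ν hsupp η hηpos.le, min_eq_right hm1.le]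
      have hne : η ≠ 0 := hηpos.ne'
      have : ∀ y : ℝ, (if η = 0 then y else (1 - Real.exp (-η * y))/η)
          = (1 - Real.exp (-η * y))/η := by intro y; rw [if_neg hne]
      simp only [this]
      have hI : Integrable (fun y => (1 - Real.exp (-η * y))/η) ν :=
        (int_one_sub_exp ν hsupp η hηpos.le).div_const η
      rw [← ofReal_integral_eq_lintegral_ofReal hI ?_]
      · congr 1
        rw [integral_div, hroot, div_self hne]
      · filter_upwards [haepos] with y hy
        have h1 := Real.exp_le_one_iff.mpr (show -η*y ≤ 0 by nlinarith)
        exact div_nonneg (by linarith) hηpos.le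
  obtain ⟨hη0, hkey⟩ := hkey
  -- measurability and nonnegativity of the density
  set F : ℝ → ℝ := fun v => Real.exp (η * v) * ∫ y in Set.Ici v, Real.exp (-η * y) ∂ν with hF
  have hinner_int : ∀ v : ℝ, Integrable (fun y => Real.exp (-η*y)) (ν.restrict (Set.Ici v)) := by
    intro v
    refine (integrable_const (1:ℝ)).mono'
      ((continuous_const.mul continuous_id).rexp).aestronglyMeasurable ?_
    refine ae_restrict_of_ae ?_
    filter_upwards [haepos] with y hy
    rw [Real.norm_eq_abs, abs_of_pos (Real.exp_pos _)]
    exact Real.exp_le_one_iff.mpr (by nlinarith)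
  have hanti : Antitone (fun v => ∫ y in Set.Ici v, Real.exp (-η * y) ∂ν) := by
    intro v w hvw
    apply setIntegral_mono_set (hinner_int v)
      (Eventually.of_forall fun y => (Real.exp_pos _).le)
    exact HasSubset.Subset.eventuallyLE (Set.Ici_subset_Ici.mpr hvw)
  have hFmeas : Measurable F := by
    exact ((continuous_const.mul continuous_id).rexp).measurable.mul hanti.measurable
  have hFnn : ∀ v, 0 ≤ F v := by
    intro v
    apply mul_nonneg (Real.exp_nonneg _)
    exact integral_nonneg fun y => (Real.exp_pos _).le
  have hint_eq : ∫ v in Set.Ioi (0:ℝ), F v = min m 1 := by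
    rw [integral_eq_lintegral_of_nonneg_ae (Eventually.of_forall hFnn)
      hFmeas.aestronglyMeasurable]
    rw [hkey, ENNReal.toReal_ofReal hmin0]
  refine ⟨hint_eq, fun hmpos => ?_⟩
  have hcpos : 0 < min m 1 := lt_min hmpos zero_lt_one
  constructor
  rw [withDensity_apply _ MeasurableSet.univ, Measure.restrict_univ]
  have : ∀ v, ENNReal.ofReal (F v / min m 1) = ENNReal.ofReal (F v) / ENNReal.ofReal (min m 1) :=
    fun v => ENNReal.ofReal_div_of_pos hcpos
  simp only [hF] at this
  simp only [this]
  simp only [div_eq_mul_inv]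
  rw [lintegral_mul_const' _ _ (by simp [ENNReal.inv_ne_top, (ENNReal.ofReal_pos.mpr hcpos).ne', hmpos])]
  rw [hkey, ENNReal.mul_inv_cancel (ENNReal.ofReal_pos.mpr hcpos).ne' ENNReal.ofReal_ne_top]
end

section
/- Let W be a scale function for ψ. If m < 1 then lim_{t→∞} W(t) = 1/(1 − m), while if m ≥ 1 then lim_{t→∞} W(t) = +∞. -/
open MeasureTheory Real Set Filter Topology

lemma exp_int_Ioi (l a : ℝ) (hl : 0 < l) :
    ∫ x in Ioi a, Real.exp (-l * x) = Real.exp (-l * a) / l := by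
  have hderiv : ∀ x ∈ Ici a, HasDerivAt (fun x => -Real.exp (-l * x) / l)
      (Real.exp (-l * x)) x := by
    intro x _
    have h1 : HasDerivAt (fun x : ℝ => -l * x) (-l) x := by
      simpa using (hasDerivAt_id x).const_mul (-l)
    have h2 := (h1.exp.neg).div_const l
    refine h2.congr_deriv ?_
    field_simp
  have htend : Tendsto (fun x => -Real.exp (-l * x) / l) atTop (𝓝 0) := by
    have : Tendsto (fun x : ℝ => -l * x) atTop atBot :=
      (tendsto_const_mul_atBot_of_neg (by linarith)).mpr tendsto_id
    have := (Real.tendsto_exp_atBot.comp this).neg.div_const l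
    simpa using this
  have := integral_Ioi_of_hasDerivAt_of_tendsto' hderiv (exp_neg_integrableOn_Ioi a hl) htend
  rw [this]
  field_simp
  ring

lemma slope_limit (r : ℝ) :
    Tendsto (fun l => (1 - Real.exp (-l * r)) / l) (𝓝[>] (0:ℝ)) (𝓝 r) := by
  have h1 : HasDerivAt (fun l : ℝ => l * (-r)) (-r) 0 := hasDerivAt_mul_const (-r)
  have h2 : HasDerivAt (fun l : ℝ => 1 - Real.exp (l * (-r))) r 0 := by
    simpa using (h1.exp).const_sub 1
  have h3 := hasDerivAt_iff_tendsto_slope.mp h2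
  have h4 : Tendsto (slope (fun l : ℝ => 1 - Real.exp (l * (-r))) 0) (𝓝[>] (0:ℝ)) (𝓝 r) :=
    h3.mono_left (nhdsWithin_mono _ (fun x hx => ne_of_gt hx))
  refine h4.congr' ?_
  filter_upwards [self_mem_nhdsWithin] with l (hl : 0 < l)
  rw [slope_def_field]
  simp [neg_mul, mul_neg]


/-- A scale function `W` for `ψ` satisfies `W(t) → 1/(1-m)` as `t → ∞` if `m < 1`,
and `W(t) → +∞` as `t → ∞` if `m ≥ 1`. -/
theorem scale_function_limit_at_infinity
    (ν : Measure ℝ) [IsFiniteMeasure ν] (hsupp : ν (Set.Iic 0) = 0)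
    (hint : Integrable (fun r : ℝ => r) ν)
    (m : ℝ) (hm : m = ∫ r, r ∂ν)
    (ψ : ℝ → ℝ) (hψ : ψ = fun l : ℝ => l - ∫ r, (1 - Real.exp (-l * r)) ∂ν)
    (η : ℝ) (hη : η = sSup {l : ℝ | 0 ≤ l ∧ ψ l = 0})
    (W : ℝ → ℝ) (hWc : ContinuousOn W (Set.Ici 0)) (hWmono : MonotoneOn W (Set.Ici 0))
    (hWnonneg : ∀ x ∈ Set.Ici (0 : ℝ), 0 ≤ W x)
    (hW : ∀ l : ℝ, η < l →
      ∫ x in Set.Ioi (0 : ℝ), Real.exp (-l * x) * W x = 1 / ψ l) :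
    (m < 1 → Tendsto W atTop (𝓝 (1 / (1 - m)))) ∧
      (1 ≤ m → Tendsto W atTop atTop) := by
  -- a.e. positivity of r
  have hpos : ∀ᵐ r ∂ν, 0 < r := by
    rw [ae_iff]
    convert hsupp using 2
    ext r
    simp [not_lt]
  -- integrability of the integrand of ψ for l ≥ 0
  have hInt1 : ∀ l : ℝ, 0 ≤ l → Integrable (fun r => 1 - Real.exp (-l * r)) ν := by
    intro l hl
    refine (integrable_const (1:ℝ)).mono' ?_ ?_
    · exact (Continuous.sub continuous_const ((continuous_const.mul continuous_id).rexp)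
        ).aestronglyMeasurable
    · filter_upwards [hpos] with r hr
      have h1 : Real.exp (-l * r) ≤ 1 := Real.exp_le_one_iff.mpr (by nlinarith)
      have h2 : 0 < Real.exp (-l * r) := Real.exp_pos _
      rw [Real.norm_eq_abs, abs_le]
      constructor <;> nlinarith
  -- pointwise bound 1 - exp(-l r) ≤ l r
  have hptw : ∀ l r : ℝ, 1 - Real.exp (-l * r) ≤ l * r := by
    intro l r
    have := Real.add_one_le_exp (-(l*r))
    rw [neg_mul]
    linarith
  -- the zero set S
  set S : Set ℝ := {l : ℝ | 0 ≤ l ∧ ψ l = 0} with hS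
  have h0S : (0:ℝ) ∈ S := ⟨le_refl 0, by rw [hψ]; simp⟩
  have hSbdd : BddAbove S := by
    refine ⟨(ν univ).toReal, fun l hl => ?_⟩
    have h1 : ∫ r, (1 - Real.exp (-l * r)) ∂ν ≤ ∫ r, (1:ℝ) ∂ν := by
      refine integral_mono (hInt1 l hl.1) (integrable_const 1) (fun r => ?_)
      have := Real.exp_pos (-l * r)
      simp only
      linarith
    have h2 : ψ l = 0 := hl.2
    rw [hψ] at h2
    simp only at h2
    rw [integral_const] at h1
    simp only [smul_eq_mul, mul_one, measureReal_def] at h1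
    linarith
  have hη0 : 0 ≤ η := hη ▸ le_csSup hSbdd h0S
  -- ψ positive beyond η
  have hψne : ∀ l : ℝ, η < l → ψ l ≠ 0 := by
    intro l hl hl0
    have : l ∈ S := ⟨le_of_lt (lt_of_le_of_lt hη0 hl), hl0⟩
    have := le_csSup hSbdd this
    rw [← hη] at this
    linarith
  have hψpos : ∀ l : ℝ, η < l → 0 < ψ l := by
    intro l hl
    have hnn : 0 ≤ ∫ x in Set.Ioi (0:ℝ), Real.exp (-l * x) * W x := by
      refine setIntegral_nonneg measurableSet_Ioi (fun x hx => ?_)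
      exact mul_nonneg (Real.exp_pos _).le (hWnonneg x (mem_Ici.mpr (le_of_lt hx)))
    rw [hW l hl] at hnn
    rcases (one_div_nonneg.mp hnn).lt_or_eq with h | h
    · exact h
    · exact absurd h.symm (hψne l hl)
  have hInteg : ∀ l : ℝ, η < l → IntegrableOn (fun x => Real.exp (-l * x) * W x) (Ioi 0) := by
    intro l hl
    by_contra hc
    have := integral_undef hc
    rw [hW l hl] at this
    exact one_div_ne_zero (hψne l hl) this
  -- upper bound: if W ≤ c on Ici 0 then 1/ψ l ≤ c / l
  have hupper : ∀ c : ℝ, (∀ x ∈ Ici (0:ℝ), W x ≤ c) → ∀ l : ℝ, η < l →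
      1 / ψ l ≤ c / l := by
    intro c hc l hl
    have hl0 : 0 < l := lt_of_le_of_lt hη0 hl
    rw [← hW l hl]
    have h1 : ∫ x in Ioi (0:ℝ), Real.exp (-l * x) * W x ≤
        ∫ x in Ioi (0:ℝ), Real.exp (-l * x) * c := by
      refine setIntegral_mono_on (hInteg l hl)
        ((exp_neg_integrableOn_Ioi 0 hl0).mul_const c) measurableSet_Ioi (fun x hx => ?_)
      exact mul_le_mul_of_nonneg_left (hc x (mem_Ici.mpr (le_of_lt hx))) (Real.exp_pos _).le
    calc ∫ x in Ioi (0:ℝ), Real.exp (-l * x) * W x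
        ≤ ∫ x in Ioi (0:ℝ), Real.exp (-l * x) * c := h1
      _ = (Real.exp (-l * 0) / l) * c := by
          rw [integral_mul_const, exp_int_Ioi l 0 hl0]
      _ = c / l := by rw [mul_zero, Real.exp_zero]; ring
  -- the key limit : ψ l / l → 1 - m as l → 0+
  have hmtend : Tendsto (fun l => ψ l / l) (𝓝[>] (0:ℝ)) (𝓝 (1 - m)) := by
    have hI : Tendsto (fun l => ∫ r, ((1 - Real.exp (-l * r)) / l) ∂ν) (𝓝[>] (0:ℝ))
        (𝓝 (∫ r, r ∂ν)) := by
      refine tendsto_integral_filter_of_dominated_convergence (fun r => r) ?_ ?_ hint ?_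
      · filter_upwards [self_mem_nhdsWithin] with l (hl : 0 < l)
        exact ((Continuous.sub continuous_const
          ((continuous_const.mul continuous_id).rexp)).div_const l).aestronglyMeasurable
      · filter_upwards [self_mem_nhdsWithin] with l (hl : 0 < l)
        filter_upwards [hpos] with r hr
        have h1 : Real.exp (-l * r) ≤ 1 := Real.exp_le_one_iff.mpr (by nlinarith)
        have h2 := hptw l r
        rw [Real.norm_eq_abs, abs_div, abs_of_pos hl, div_le_iff₀ hl, abs_le]
        constructor <;> nlinarith
      · exact Eventually.of_forall (fun r => slope_limit r)
    have hI' : Tendsto (fun l => (∫ r, (1 - Real.exp (-l * r)) ∂ν) / l) (𝓝[>] (0:ℝ))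
        (𝓝 m) := by
      rw [hm]
      refine hI.congr (fun l => ?_)
      rw [integral_div]
    have := (tendsto_const_nhds (x := (1:ℝ)) (f := 𝓝[>] (0:ℝ))).sub hI'
    refine this.congr' ?_
    filter_upwards [self_mem_nhdsWithin] with l (hl : 0 < l)
    rw [hψ]
    simp only
    rw [sub_div, div_self (ne_of_gt hl)]
  -- monotone extension of W
  set W' : ℝ → ℝ := fun x => W (max x 0) with hW'
  have hW'mono : Monotone W' := fun a b hab =>
    hWmono (le_max_right a 0) (le_max_right b 0) (max_le_max hab le_rfl)
  have hWeq : W =ᶠ[atTop] W' := by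
    filter_upwards [eventually_ge_atTop (0:ℝ)] with x hx
    rw [hW']
    simp [max_eq_left hx]
  constructor
  · -- case m < 1
    intro hm1
    have h1m : 0 < 1 - m := by linarith
    -- η = 0
    have hSsub : S = {0} := by
      refine Subset.antisymm (fun l hl => ?_) (by simpa using h0S)
      rcases hl.1.lt_or_eq with h | h
      · exfalso
        have hub : ∫ r, (1 - Real.exp (-l * r)) ∂ν ≤ l * m := by
          rw [hm, ← integral_const_mul]
          exact integral_mono (hInt1 l hl.1) (hint.const_mul l) (fun r => hptw l r)
        have h2 := hl.2
        rw [hψ] at h2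
        simp only at h2
        nlinarith
      · simp [← h]
    have hηz : η = 0 := by rw [hη, hSsub, csSup_singleton]
    -- W is bounded by 1/(1-m)
    have hWT : ∀ T ∈ Ici (0:ℝ), W T ≤ 1 / (1 - m) := by
      intro T hT
      have key : ∀ l : ℝ, 0 < l → W T * Real.exp (-l * T) ≤ 1 / (1 - m) := by
        intro l hl
        have hlη : η < l := hηz ▸ hl
        have hlow : W T * (Real.exp (-l * T) / l) ≤ 1 / ψ l := by
          rw [← hW l hlη]
          have hs1 : ∫ x in Ioi T, Real.exp (-l * x) * W x ≤
              ∫ x in Ioi (0:ℝ), Real.exp (-l * x) * W x := by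
            refine setIntegral_mono_set (hInteg l hlη) ?_ ?_
            · refine (ae_restrict_iff' measurableSet_Ioi).mpr (ae_of_all _ (fun x hx => ?_))
              exact mul_nonneg (Real.exp_pos _).le (hWnonneg x (mem_Ici.mpr (le_of_lt hx)))
            · exact HasSubset.Subset.eventuallyLE (Ioi_subset_Ioi hT)
          have hs2 : ∫ x in Ioi T, Real.exp (-l * x) * W T ≤
              ∫ x in Ioi T, Real.exp (-l * x) * W x := by
            refine setIntegral_mono_on ((exp_neg_integrableOn_Ioi T hl).mul_const _)
              ((hInteg l hlη).mono_set (Ioi_subset_Ioi hT)) measurableSet_Ioi (fun x hx => ?_)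
            exact mul_le_mul_of_nonneg_left (hWmono hT (mem_Ici.mpr (hT.trans (le_of_lt hx))) (le_of_lt hx))
              (Real.exp_pos _).le
          have hs3 : ∫ x in Ioi T, Real.exp (-l * x) * W T =
              (Real.exp (-l * T) / l) * W T := by
            rw [integral_mul_const, exp_int_Ioi l T hl]
          linarith [hs1, hs2, hs3.symm.le]
        have hψlb : l * (1 - m) ≤ ψ l := by
          have hub : ∫ r, (1 - Real.exp (-l * r)) ∂ν ≤ l * m := by
            rw [hm, ← integral_const_mul]
            exact integral_mono (hInt1 l hl.le) (hint.const_mul l) (fun r => hptw l r)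
          rw [hψ]; simp only; nlinarith
        have h3 : 1 / ψ l ≤ 1 / (l * (1 - m)) :=
          one_div_le_one_div_of_le (by positivity) hψlb
        have h4 : W T * (Real.exp (-l * T) / l) ≤ 1 / (l * (1 - m)) := hlow.trans h3
        have hlne : l ≠ 0 := ne_of_gt hl
        rw [le_div_iff₀ (show (0:ℝ) < l * (1 - m) by positivity)] at h4
        rw [le_div_iff₀ h1m]
        calc W T * Real.exp (-l * T) * (1 - m)
            = W T * (Real.exp (-l * T) / l) * (l * (1 - m)) := by field_simp
          _ ≤ 1 := h4
      -- let l → 0+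
      have htc : Tendsto (fun l : ℝ => W T * Real.exp (-l * T)) (𝓝[>] (0:ℝ))
          (𝓝 (W T)) := by
        have : Tendsto (fun l : ℝ => W T * Real.exp (-l * T)) (𝓝 (0:ℝ))
            (𝓝 (W T * Real.exp (-0 * T))) := by
          exact (tendsto_const_nhds.mul
            (((continuous_neg.mul continuous_const).rexp).tendsto 0))
        simp only [neg_zero, zero_mul, Real.exp_zero, mul_one] at this
        exact this.mono_left nhdsWithin_le_nhds
      refine le_of_tendsto htc ?_
      filter_upwards [self_mem_nhdsWithin] with l (hl : 0 < l)
      exact key l hl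
    -- limit of W'
    have hbdd : BddAbove (range W') := by
      refine ⟨1 / (1 - m), ?_⟩
      rintro _ ⟨x, rfl⟩
      exact hWT _ (le_max_right x 0)
    have htend : Tendsto W' atTop (𝓝 (⨆ x, W' x)) := tendsto_atTop_ciSup hW'mono hbdd
    have hLle : (⨆ x, W' x) ≤ 1 / (1 - m) :=
      ciSup_le (fun x => hWT _ (le_max_right x 0))
    have hLge : 1 / (1 - m) ≤ ⨆ x, W' x := by
      set L := ⨆ x, W' x with hL
      have hWleL : ∀ x ∈ Ici (0:ℝ), W x ≤ L := by
        intro x hx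
        have : W' x ≤ L := le_ciSup hbdd x
        simpa [hW', max_eq_left (mem_Ici.mp hx)] using this
      have hub := hupper L hWleL
      -- l / ψ l ≤ L for l > 0 ; and l / ψ l → 1/(1-m)
      have hq : ∀ l : ℝ, 0 < l → l / ψ l ≤ L := by
        intro l hl
        have hlη : η < l := hηz ▸ hl
        have h1 := hub l hlη
        rw [div_le_div_iff₀ (hψpos l hlη) hl] at h1
        rw [div_le_iff₀ (hψpos l hlη)]
        nlinarith
      have htq : Tendsto (fun l => l / ψ l) (𝓝[>] (0:ℝ)) (𝓝 (1 / (1 - m))) := by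
        have := hmtend.inv₀ (ne_of_gt h1m)
        rw [← one_div] at this
        refine this.congr' ?_
        filter_upwards [self_mem_nhdsWithin] with l (hl : 0 < l)
        rw [inv_div]
      refine le_of_tendsto htq ?_
      filter_upwards [self_mem_nhdsWithin] with l (hl : 0 < l)
      exact hq l hl
    have : (⨆ x, W' x) = 1 / (1 - m) := le_antisymm hLle hLge
    rw [this] at htend
    exact Tendsto.congr' hWeq.symm htend
  · -- case 1 ≤ m
    intro hm1
    by_cases hbdd : BddAbove (range W')
    · exfalso
      set C := max (⨆ x, W' x) 1 with hC
      have hC1 : (1:ℝ) ≤ C := le_max_right _ _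
      have hC0 : (0:ℝ) < C := lt_of_lt_of_le one_pos hC1
      have hWC : ∀ x ∈ Ici (0:ℝ), W x ≤ C := by
        intro x hx
        have : W' x ≤ ⨆ x, W' x := le_ciSup hbdd x
        simp only [hW', max_eq_left (mem_Ici.mp hx)] at this
        exact this.trans (le_max_left _ _)
      have hkey : ∀ l : ℝ, η < l → l / C ≤ ψ l := by
        intro l hl
        have hl0 : 0 < l := lt_of_le_of_lt hη0 hl
        have h1 := hupper C hWC l hl
        rw [div_le_div_iff₀ (hψpos l hl) hl0] at h1
        rw [div_le_iff₀ hC0]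
        nlinarith
      rcases hη0.eq_or_lt with hc | hc
      · -- η = 0 : contradiction with ψ l / l → 1 - m ≤ 0
        have h1 : 1 / C ≤ 1 - m := by
          refine ge_of_tendsto hmtend ?_
          filter_upwards [self_mem_nhdsWithin] with l (hl : 0 < l)
          have h2 := hkey l (hc ▸ hl)
          rw [div_le_iff₀ hC0] at h2
          rw [le_div_iff₀ hl]
          have hCC : 1/C * C = 1 := by field_simp
          nlinarith [one_div_pos.mpr hC0]
        have : (0:ℝ) < 1 / C := by positivity
        linarith
      · -- η > 0 : ψ is continuous from the right at η with ψ η = 0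
        have hψcont : Tendsto ψ (𝓝[Ici 0] η) (𝓝 (ψ η)) := by
          have hI : Tendsto (fun l => ∫ r, (1 - Real.exp (-l * r)) ∂ν) (𝓝[Ici 0] η)
              (𝓝 (∫ r, (1 - Real.exp (-η * r)) ∂ν)) := by
            refine tendsto_integral_filter_of_dominated_convergence (fun _ => (1:ℝ)) ?_ ?_
              (integrable_const 1) ?_
            · filter_upwards [] with l
              exact (Continuous.sub continuous_const
                ((continuous_const.mul continuous_id).rexp)).aestronglyMeasurable
            · filter_upwards [self_mem_nhdsWithin] with l (hl : 0 ≤ l)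
              filter_upwards [hpos] with r hr
              have h1 : Real.exp (-l * r) ≤ 1 := Real.exp_le_one_iff.mpr (by nlinarith)
              have h2 := Real.exp_pos (-l * r)
              rw [Real.norm_eq_abs, abs_le]
              constructor <;> nlinarith
            · refine Eventually.of_forall (fun r => ?_)
              have : Continuous (fun l : ℝ => 1 - Real.exp (-l * r)) :=
                Continuous.sub continuous_const ((continuous_neg.mul continuous_const).rexp)
              exact (this.tendsto η).mono_left nhdsWithin_le_nhds
          rw [hψ]
          exact (Filter.tendsto_id.mono_left nhdsWithin_le_nhds).sub hI
        have hψη : ψ η = 0 := by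
          obtain ⟨u, humono, hutend, huS⟩ := exists_seq_tendsto_sSup ⟨0, h0S⟩ hSbdd
          rw [← hη] at hutend
          have hu2 : Tendsto u atTop (𝓝[Ici 0] η) :=
            tendsto_nhdsWithin_of_tendsto_nhds_of_eventually_within u hutend
              (Eventually.of_forall (fun n => (huS n).1))
          have := hψcont.comp hu2
          have h2 : Tendsto (fun n => ψ (u n)) atTop (𝓝 0) := by
            refine Tendsto.congr' ?_ tendsto_const_nhds
            exact Eventually.of_forall (fun n => ((huS n).2).symm)
          exact tendsto_nhds_unique this h2
        have hψtend : Tendsto ψ (𝓝[>] η) (𝓝 0) := by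
          rw [← hψη]
          exact hψcont.mono_left (nhdsWithin_mono _ (fun x hx => hη0.trans (le_of_lt hx)))
        have h1 : η / C ≤ 0 := by
          refine ge_of_tendsto hψtend ?_
          filter_upwards [self_mem_nhdsWithin] with l (hl : η < l)
          exact le_trans ((div_le_div_iff_of_pos_right hC0).mpr hl.le) (hkey l hl)
        have : (0:ℝ) < η / C := by positivity
        linarith
    · have := tendsto_atTop_atTop_of_monotone hW'mono ?_
      · exact Tendsto.congr' hWeq.symm this
      · intro b
        obtain ⟨y, ⟨x, rfl⟩, hby⟩ := not_bddAbove_iff.mp hbdd b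
        exact ⟨x, hby.le⟩
end
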